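/- Let k ≥ 2 and let (α, κ) be an idempotent state system on A_k satisfying Σ_{i,j∈ℤ_k} α_{i,j} = Σ_{r∈ℤ_k} κ_{r,r} = 1/2. Fix t ∈ ℤ_k and suppose (r₀, s₀) ∈ ℤ_k×ℤ_k with r₀ − s₀ = t satisfies |κ_{r₀,s₀}| = max{ |κ_{r,s}| : r,s ∈ ℤ_k, r − s = t }. Then for every (i,j) ∈ ℤ_k×ℤ_k with α_{i,j} ≠ 0 one has κ_{r₀,s₀} = η^{−it} κ_{r₀+j,s₀+j} = η^{−it} κ_{r₀−j,s₀−j}. Moreover, if κ_{r₀,s₀} ≠ 0, then η^{2pt} = 1, where p := min{ i ∈ {1,…,k} : α_{i mod k, j} ≠ 0 for some j ∈ ℤ_k }. -/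

import Mathlib

/-! Statement 8 (Claim 2): for an idempotent state system with
`Σα = Tr K = 1/2`, if `|κ_{r₀,s₀}|` is maximal on the diagonal `r − s = t`,
then for every `(i,j)` with `α_{i,j} ≠ 0` one has
`κ_{r₀,s₀} = η^{−it} κ_{r₀+j,s₀+j} = η^{−it} κ_{r₀−j,s₀−j}`; moreover if
`κ_{r₀,s₀} ≠ 0` then `η^{2pt} = 1`, where `p` is the minimal first
coordinate in the support of `α`. -/

open Finset
open scoped ComplexOrder

noncomputable section

/-- `η^t` for `t ∈ ℤ_k`, where `η = exp(2πi/k)`. -/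
def etac (k : ℕ) [NeZero k] (t : ZMod k) : ℂ :=
  Complex.exp (2 * (Real.pi : ℂ) * Complex.I * (t.val : ℂ) / (k : ℂ))

lemma etac_eq_pow (k : ℕ) [NeZero k] (x : ZMod k) :
    etac k x = Complex.exp (2 * (Real.pi : ℂ) * Complex.I / (k : ℂ)) ^ x.val := by
  rw [etac, ← Complex.exp_nat_mul]
  congr 1
  ring

lemma zeta_pow_k (k : ℕ) [NeZero k] :
    Complex.exp (2 * (Real.pi : ℂ) * Complex.I / (k : ℂ)) ^ k = 1 := by
  rw [← Complex.exp_nat_mul]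
  have hk : (k : ℂ) ≠ 0 := Nat.cast_ne_zero.mpr (NeZero.ne k)
  rw [show (k : ℂ) * (2 * (Real.pi : ℂ) * Complex.I / (k : ℂ)) = 2 * Real.pi * Complex.I by
    field_simp]
  exact Complex.exp_two_pi_mul_I

lemma zeta_pow_mod (k : ℕ) [NeZero k] (n : ℕ) :
    Complex.exp (2 * (Real.pi : ℂ) * Complex.I / (k : ℂ)) ^ (n % k) =
    Complex.exp (2 * (Real.pi : ℂ) * Complex.I / (k : ℂ)) ^ n := by
  conv_rhs => rw [← Nat.mod_add_div n k]
  rw [pow_add, pow_mul, zeta_pow_k, one_pow, mul_one]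

lemma etac_add (k : ℕ) [NeZero k] (x y : ZMod k) :
    etac k (x + y) = etac k x * etac k y := by
  rw [etac_eq_pow, etac_eq_pow, etac_eq_pow, ZMod.val_add, zeta_pow_mod, pow_add]

lemma etac_zero (k : ℕ) [NeZero k] : etac k 0 = 1 := by
  simp [etac]

lemma abs_etac (k : ℕ) [NeZero k] (x : ZMod k) : ‖etac k x‖ = 1 := by
  rw [etac, show 2 * (Real.pi : ℂ) * Complex.I * (x.val : ℂ) / (k : ℂ) =
    ((2 * Real.pi * x.val / k : ℝ) : ℂ) * Complex.I by push_cast; ring]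
  exact Complex.norm_exp_ofReal_mul_I _

lemma pair_eq (a b c : ℂ) (h : a + b = 2 * c) (ha : ‖a‖ ≤ ‖c‖)
    (hb : ‖b‖ ≤ ‖c‖) : a = c ∧ b = c := by
  have hb' : b = 2 * c - a := by linear_combination h
  have hid : 2 * Complex.normSq (a - c) =
      Complex.normSq a + Complex.normSq (2 * c - a) - 2 * Complex.normSq c := by
    simp [Complex.normSq_apply, Complex.sub_re, Complex.sub_im, Complex.add_re,
      Complex.add_im, Complex.mul_re, Complex.mul_im]
    ring
  have h1 : Complex.normSq a ≤ Complex.normSq c := by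
    rw [← Complex.sq_norm, ← Complex.sq_norm]
    exact pow_le_pow_left₀ (norm_nonneg a) ha 2
  have h2 : Complex.normSq (2 * c - a) ≤ Complex.normSq c := by
    rw [← hb', ← Complex.sq_norm, ← Complex.sq_norm]
    exact pow_le_pow_left₀ (norm_nonneg b) hb 2
  have h0 : Complex.normSq (a - c) ≤ 0 := by linarith
  have hac : a = c := by
    have := Complex.normSq_eq_zero.mp (le_antisymm h0 (Complex.normSq_nonneg _))
    linear_combination this
  exact ⟨hac, by rw [hb', hac]; ring⟩

lemma align {ι : Type*} [Fintype ι] (z : ι → ℂ) (b : ι → ℝ) (u : ℂ)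
    (hz : ∀ i, ‖z i‖ ≤ b i)
    (hsum : ∑ i, z i = u)
    (hbsum : ∑ i, b i = ‖u‖) :
    ∀ i, z i * (‖u‖ : ℂ) = (b i : ℂ) * u := by
  set M := ‖u‖ with hM
  have hre : ∀ i, ((starRingEnd ℂ) u * z i).re ≤ b i * M := by
    intro i
    calc ((starRingEnd ℂ) u * z i).re ≤ ‖(starRingEnd ℂ) u * z i‖ :=
          Complex.re_le_norm _
      _ = M * ‖z i‖ := by rw [norm_mul, Complex.norm_conj]
      _ ≤ M * b i := mul_le_mul_of_nonneg_left (hz i) (norm_nonneg u)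
      _ = b i * M := mul_comm _ _
  have hsumre : ∑ i, ((starRingEnd ℂ) u * z i).re = ∑ i, b i * M := by
    rw [← Complex.re_sum, ← Finset.mul_sum, hsum, ← Finset.sum_mul, hbsum]
    rw [mul_comm, Complex.mul_conj, Complex.ofReal_re, Complex.normSq_eq_norm_sq, ← hM, sq]
  have heq : ∀ i, ((starRingEnd ℂ) u * z i).re = b i * M :=
    fun i => (Finset.sum_eq_sum_iff_of_le (fun i _ => hre i)).mp hsumre i (Finset.mem_univ i)
  intro i
  have hbnn : 0 ≤ b i := le_trans (norm_nonneg _) (hz i)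
  have h0 : Complex.normSq (z i * (M : ℂ) - (b i : ℂ) * u) ≤ 0 := by
    have expand : Complex.normSq (z i * (M : ℂ) - (b i : ℂ) * u) =
        M ^ 2 * Complex.normSq (z i) + (b i) ^ 2 * Complex.normSq u -
          2 * (b i * M) * ((starRingEnd ℂ) u * z i).re := by
      simp [Complex.normSq_apply, Complex.sub_re, Complex.sub_im, Complex.mul_re,
        Complex.mul_im, Complex.conj_re, Complex.conj_im]
      ring
    rw [expand, heq i, ← Complex.sq_norm (z i), ← Complex.sq_norm u, ← hM]
    nlinarith [mul_le_mul (hz i) (hz i) (norm_nonneg (z i)) hbnn, sq_nonneg M,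
      norm_nonneg u]
  have := Complex.normSq_eq_zero.mp (le_antisymm h0 (Complex.normSq_nonneg _))
  linear_combination this

lemma key (k : ℕ) [NeZero k] (α κ : ZMod k → ZMod k → ℂ)
    (hαpos : ∀ i j : ZMod k, 0 ≤ α i j)
    (hB : ∀ r s : ZMod k, κ r s = ∑ i : ZMod k, ∑ j : ZMod k,
        etac k (i * (s - r)) * α i j * (κ (r + j) (s + j) + κ (r - j) (s - j)))
    (hα : (∑ i : ZMod k, ∑ j : ZMod k, α i j) = 1 / 2)
    (t : ZMod k) (M : ℝ)
    (hmax : ∀ r s : ZMod k, r - s = t → ‖κ r s‖ ≤ M)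
    (r s : ZMod k) (hrs : r - s = t) (hMeq : ‖κ r s‖ = M)
    (i j : ZMod k) (hij : α i j ≠ 0) :
    κ r s = etac k (-(i * t)) * κ (r + j) (s + j) ∧
    κ r s = etac k (-(i * t)) * κ (r - j) (s - j) := by
  have ha : ∀ i j : ZMod k, α i j = (((α i j).re : ℝ) : ℂ) := by
    intro i j
    obtain ⟨h1, h2⟩ := Complex.nonneg_iff.mp (hαpos i j)
    exact Complex.ext (by simp) (by simp [← h2])
  have hann : ∀ i j : ZMod k, 0 ≤ (α i j).re :=
    fun i j => (Complex.nonneg_iff.mp (hαpos i j)).1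
  have hdiag1 : (r + j) - (s + j) = t := by
    rw [show r + j - (s + j) = r - s from by ring, hrs]
  have hdiag2 : (r - j) - (s - j) = t := by
    rw [show r - j - (s - j) = r - s from by ring, hrs]
  rcases eq_or_ne M 0 with hM0 | hM0
  · -- everything on the diagonal is zero
    have hu : κ r s = 0 := norm_eq_zero.mp (by rw [hMeq, hM0])
    have h1 : κ (r + j) (s + j) = 0 := norm_eq_zero.mp
      (le_antisymm (hM0 ▸ hmax _ _ hdiag1) (norm_nonneg _))
    have h2 : κ (r - j) (s - j) = 0 := norm_eq_zero.mp
      (le_antisymm (hM0 ▸ hmax _ _ hdiag2) (norm_nonneg _))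
    constructor <;> simp [hu, h1, h2]
  · have hMpos : 0 < M := lt_of_le_of_ne (hMeq ▸ norm_nonneg _) (Ne.symm hM0)
    set u := κ r s with hu
    have halign := align
      (fun q : ZMod k × ZMod k => etac k (q.1 * (s - r)) * α q.1 q.2 *
        (κ (r + q.2) (s + q.2) + κ (r - q.2) (s - q.2)))
      (fun q : ZMod k × ZMod k => (α q.1 q.2).re * (2 * M)) u
      (by
        rintro ⟨i', j'⟩
        simp only [norm_mul, abs_etac, one_mul]
        have hα1 : ‖α i' j'‖ = (α i' j').re := by
          rw [ha i' j', Complex.norm_real, Real.norm_eq_abs, abs_of_nonneg]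
          · simp
          · simpa using hann i' j'
        rw [hα1]
        have hd1 : (r + j') - (s + j') = t := by
          rw [show r + j' - (s + j') = r - s from by ring, hrs]
        have hd2 : (r - j') - (s - j') = t := by
          rw [show r - j' - (s - j') = r - s from by ring, hrs]
        have hsumle : ‖κ (r + j') (s + j') + κ (r - j') (s - j')‖ ≤ 2 * M := by
          calc ‖κ (r + j') (s + j') + κ (r - j') (s - j')‖ ≤
              ‖κ (r + j') (s + j')‖ + ‖κ (r - j') (s - j')‖ :=
                norm_add_le _ _
            _ ≤ 2 * M := by
                have := hmax _ _ hd1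
                have := hmax _ _ hd2
                linarith
        exact mul_le_mul_of_nonneg_left hsumle (hann i' j'))
      (by rw [Fintype.sum_prod_type]; exact (hB r s).symm)
      (by
        have hre : (∑ q : ZMod k × ZMod k, (α q.1 q.2).re) = 1 / 2 := by
          rw [Fintype.sum_prod_type]
          have := congrArg Complex.re hα
          simpa [Complex.re_sum] using this
        rw [← Finset.sum_mul, hre, hMeq]
        ring)
      (i, j)
    simp only at halign
    rw [hMeq] at halign
    have ha0 : (((α i j).re : ℝ) : ℂ) ≠ 0 := ha i j ▸ hij
    have hM0' : ((M : ℝ) : ℂ) ≠ 0 := Complex.ofReal_ne_zero.mpr hM0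
    have E : etac k (i * (s - r)) * (κ (r + j) (s + j) + κ (r - j) (s - j)) = 2 * u := by
      apply mul_left_cancel₀ (mul_ne_zero ha0 hM0')
      rw [ha i j] at halign
      push_cast at halign ⊢
      simp only [Complex.ofReal_re] at halign
      linear_combination halign
    have harg : i * (s - r) = -(i * t) := by rw [← hrs]; ring
    rw [harg] at E
    have he : ‖etac k (-(i * t))‖ = 1 := abs_etac k _
    have hp := pair_eq (etac k (-(i * t)) * κ (r + j) (s + j))
      (etac k (-(i * t)) * κ (r - j) (s - j)) u
      (by linear_combination E)
      (by rw [norm_mul, he, one_mul, hMeq]; exact hmax _ _ hdiag1)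
      (by rw [norm_mul, he, one_mul, hMeq]; exact hmax _ _ hdiag2)
    exact ⟨hp.1.symm, hp.2.symm⟩

/-- An *idempotent state system* on the Sekine quantum group `A_k`: the
coefficients `α_{i,j}` are nonnegative reals (expressed via the order on `ℂ`),
the matrix `K = [κ_{r,s}]` is positive semidefinite, and the equations (A),
(B), (C) hold. -/
def IdemSystem (k : ℕ) [NeZero k] (α κ : ZMod k → ZMod k → ℂ) : Prop :=
  (∀ i j : ZMod k, 0 ≤ α i j) ∧
  (Matrix.of κ).PosSemidef ∧
  (∀ i j : ZMod k, α i j =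
      (∑ r : ZMod k, ∑ s : ZMod k, α (i - r) (j - s) * α r s)
        + (1 / (k : ℂ)) * ∑ r : ZMod k, ∑ s : ZMod k,
            etac k (i * (r - s)) * (κ r s * κ (r + j) (s + j))) ∧
  (∀ r s : ZMod k, κ r s =
      ∑ i : ZMod k, ∑ j : ZMod k,
        etac k (i * (s - r)) * α i j * (κ (r + j) (s + j) + κ (r - j) (s - j))) ∧
  ((∑ i : ZMod k, ∑ j : ZMod k, α i j) + ∑ r : ZMod k, κ r r = 1)

theorem stmt8 (k : ℕ) [NeZero k] (hk : 2 ≤ k) (α κ : ZMod k → ZMod k → ℂ)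
    (h : IdemSystem k α κ)
    (hα : (∑ i : ZMod k, ∑ j : ZMod k, α i j) = 1 / 2)
    (hκ : (∑ r : ZMod k, κ r r) = 1 / 2)
    (t r₀ s₀ : ZMod k) (ht : r₀ - s₀ = t)
    (hmax : ∀ r s : ZMod k, r - s = t → ‖κ r s‖ ≤ ‖κ r₀ s₀‖)
    (p : ℕ)
    (hp : p = sInf {i : ℕ | 1 ≤ i ∧ i ≤ k ∧ ∃ j : ZMod k, α (i : ZMod k) j ≠ 0}) :
    (∀ i j : ZMod k, α i j ≠ 0 →
      κ r₀ s₀ = etac k (-(i * t)) * κ (r₀ + j) (s₀ + j) ∧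
      κ r₀ s₀ = etac k (-(i * t)) * κ (r₀ - j) (s₀ - j)) ∧
    (κ r₀ s₀ ≠ 0 → etac k (2 * (p : ZMod k) * t) = 1) := by
  obtain ⟨hαpos, -, -, hB, -⟩ := h
  set M := ‖κ r₀ s₀‖ with hM
  have part1 : ∀ i j : ZMod k, α i j ≠ 0 →
      κ r₀ s₀ = etac k (-(i * t)) * κ (r₀ + j) (s₀ + j) ∧
      κ r₀ s₀ = etac k (-(i * t)) * κ (r₀ - j) (s₀ - j) := fun i j hij =>
    key k α κ hαpos hB hα t M hmax r₀ s₀ ht hM.symm i j hij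
  refine ⟨part1, ?_⟩
  intro hne
  have hex : ∃ i j : ZMod k, α i j ≠ 0 := by
    by_contra hc
    push_neg at hc
    simp only [hc, Finset.sum_const_zero] at hα
    exact (by norm_num : ((0 : ℂ) ≠ 1 / 2)) hα
  obtain ⟨i0, j0, hij0⟩ := hex
  have hSne : Set.Nonempty {i : ℕ | 1 ≤ i ∧ i ≤ k ∧ ∃ j : ZMod k, α (i : ZMod k) j ≠ 0} := by
    rcases eq_or_ne i0 0 with h0 | h0
    · exact ⟨k, le_trans (by norm_num) hk, le_refl k,
        ⟨j0, by rwa [ZMod.natCast_self, ← h0]⟩⟩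
    · refine ⟨i0.val, ?_, le_of_lt (ZMod.val_lt i0), ⟨j0, ?_⟩⟩
      · exact Nat.one_le_iff_ne_zero.mpr (fun hv => h0 ((ZMod.val_eq_zero i0).mp hv))
      · rwa [ZMod.natCast_rightInverse i0]
  have hpmem : 1 ≤ p ∧ p ≤ k ∧ ∃ j : ZMod k, α (p : ZMod k) j ≠ 0 := by
    rw [hp]; exact Nat.sInf_mem hSne
  obtain ⟨-, -, j, hj⟩ := hpmem
  set pc : ZMod k := (p : ZMod k) with hpc
  have h1 := (part1 pc j hj).1
  have habsplus : ‖κ (r₀ + j) (s₀ + j)‖ = M := by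
    have h2 := congrArg norm h1
    rw [norm_mul, abs_etac, one_mul] at h2
    exact h2.symm
  have hd : (r₀ + j) - (s₀ + j) = t := by
    rw [show r₀ + j - (s₀ + j) = r₀ - s₀ from by ring, ht]
  have h2 := (key k α κ hαpos hB hα t M hmax (r₀ + j) (s₀ + j) hd habsplus pc j hj).2
  rw [show r₀ + j - j = r₀ from by ring, show s₀ + j - j = s₀ from by ring] at h2
  have hsq : etac k (-(pc * t)) * etac k (-(pc * t)) = 1 := by
    have h3 : (etac k (-(pc * t)) * etac k (-(pc * t)) - 1) * κ r₀ s₀ = 0 := by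
      linear_combination (-(etac k (-(pc * t)))) * h2 - h1
    rcases mul_eq_zero.mp h3 with h4 | h4
    · linear_combination h4
    · exact absurd h4 hne
  have hmul : etac k (2 * pc * t) * (etac k (-(pc * t)) * etac k (-(pc * t))) = 1 := by
    rw [← etac_add, ← etac_add,
      show 2 * pc * t + (-(pc * t) + -(pc * t)) = 0 from by ring, etac_zero]
  rw [hsq, mul_one] at hmul
  exact hmul
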